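/- For any connected CW-complex X, cat(X) ≤ Cat(X), where Cat(X) is the cone-length: the least m such that there is a sequence of cofibrations K_i → F_{i-1} → F_i (1 ≤ i ≤ m) with F_0 = * and F_m ≃ X. -/

import Mathlib

/-!
STATEMENT 4: For any connected CW-complex X, cat(X) ≤ Cat(X), where Cat(X) is the
cone-length: the least m such that there is a sequence of cofibrations
K_i → F_{i-1} → F_i (1 ≤ i ≤ m) with F_0 = * and F_m ≃ X.

We formalize a cone-decomposition of length m as the data of spaces F_i with F_0 a point,
each F_i being (homeomorphic to) the mapping cone of a map K_i → F_{i-1}, and F_m homotopy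
equivalent to X; and cat via open covers by sets contractible in X.  The statement:
if X is a connected CW-complex admitting a cone-decomposition of length m, then cat(X) ≤ m;
i.e. cat(X) ≤ Cat(X).
-/

universe u

/-- The gluing relation for the mapping cone of `f : K → A`: the cone coordinate `1` end of
`K × I` is glued to `A` along `f`, and the `0` end is collapsed to the cone point. -/
inductive ConeRel {K A : Type u} (f : K → A) :
    (K × unitInterval) ⊕ A → (K × unitInterval) ⊕ A → Prop
  | glue (k : K) : ConeRel f (Sum.inl (k, 1)) (Sum.inr (f k))
  | apex (k k' : K) : ConeRel f (Sum.inl (k, 0)) (Sum.inl (k', 0))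

/-- The mapping cone `A ∪_f CK` of `f : K → A`. -/
abbrev MappingCone {K A : Type u} (f : K → A) : Type u := Quot (ConeRel f)

/-- The canonical inclusion of the base `A` into the mapping cone of `f : K → A`. -/
def MappingCone.incl {K A : Type u} (f : K → A) (a : A) : MappingCone f :=
  Quot.mk _ (Sum.inr a)

/-- A cone-decomposition of `X` of length `m`: a sequence of cofibrations
`K_i → F_{i-1} ↪ F_i` (each `F_i` is the mapping cone of a map `K_i → F_{i-1}`),
with `F_0 = *` and `F_m ≃ X`.  Its existence for some `m` says `Cat(X) ≤ m`. -/
structure ConeDecomp (X : Type u) [TopologicalSpace X] (m : ℕ) where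
  /-- The filtration spaces `F_0, …, F_m`. -/
  F : Fin (m + 1) → TopCat.{u}
  /-- The attaching spaces `K_1, …, K_m`. -/
  K : Fin m → TopCat.{u}
  /-- The attaching maps `h_i : K_i → F_{i-1}`. -/
  h : ∀ i : Fin m, C(K i, F i.castSucc)
  /-- `F_0` is a one-point space. -/
  F0 : Unique (F 0)
  /-- Each `F_i` is the mapping cone of `h_i`. -/
  cone : ∀ i : Fin m, F i.succ ≃ₜ MappingCone ⇑(h i)
  /-- `F_m` has the homotopy type of `X`. -/
  equiv : ContinuousMap.HomotopyEquiv (F (Fin.last m)) X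

/-- A subset `U` of `X` is contractible in `X` if the inclusion `U ↪ X` is homotopic to a
constant map. -/
def ContractibleIn {X : Type u} [TopologicalSpace X] (U : Set X) : Prop :=
  ∃ (x0 : X) (H : C(U × unitInterval, X)),
    (∀ u : U, H (u, 0) = (u : X)) ∧ (∀ u : U, H (u, 1) = x0)

/-- `catLE X n` : `X` has an open cover by `n+1` sets, each contractible in `X`. -/
def catLE (X : Type u) [TopologicalSpace X] (n : ℕ) : Prop :=
  ∃ U : Fin (n + 1) → Set X,
    (∀ i, IsOpen (U i)) ∧ (∀ x, ∃ i, x ∈ U i) ∧ ∀ i, ContractibleIn (U i)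

open Set Function Topology

lemma unitInterval_one_ne_zero : (1 : unitInterval) ≠ 0 := fun h => by
  have := congrArg Subtype.val h
  norm_num at this

open Classical in
noncomputable def coneNorm {K A : Type u} (f : K → A) :
    (K × unitInterval) ⊕ A → ((K × unitInterval) ⊕ A) ⊕ Unit
  | Sum.inl (k, t) =>
      if t = 0 then Sum.inr () else if t = 1 then Sum.inl (Sum.inr (f k))
      else Sum.inl (Sum.inl (k, t))
  | Sum.inr a => Sum.inl (Sum.inr a)

lemma coneNorm_inl {K A : Type u} (f : K → A) (k : K) (t : unitInterval) :
    coneNorm f (Sum.inl (k, t)) = if t = 0 then Sum.inr () else if t = 1 then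
      Sum.inl (Sum.inr (f k)) else Sum.inl (Sum.inl (k, t)) := rfl

lemma coneNorm_inr {K A : Type u} (f : K → A) (a : A) :
    coneNorm f (Sum.inr a) = Sum.inl (Sum.inr a) := rfl

lemma coneNorm_rel {K A : Type u} (f : K → A) :
    ∀ x y, ConeRel f x y → coneNorm f x = coneNorm f y := by
  rintro _ _ (⟨k⟩ | ⟨k, k'⟩)
  · rw [coneNorm_inl, coneNorm_inr, if_neg unitInterval_one_ne_zero, if_pos rfl]
  · rw [coneNorm_inl, coneNorm_inl, if_pos rfl, if_pos rfl]

lemma coneNorm_eq {K A : Type u} (f : K → A) {x y : (K × unitInterval) ⊕ A}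
    (h : Quot.mk (ConeRel f) x = Quot.mk (ConeRel f) y) : coneNorm f x = coneNorm f y :=
  congrArg (Quot.lift (coneNorm f) (coneNorm_rel f)) h

lemma cone_eq_inr {K A : Type u} (f : K → A) {a : A} {y : (K × unitInterval) ⊕ A}
    (h : Quot.mk (ConeRel f) (Sum.inr a) = Quot.mk (ConeRel f) y) :
    y = Sum.inr a ∨ ∃ k, y = Sum.inl (k, 1) ∧ f k = a := by
  have hn := coneNorm_eq f h
  rcases y with ⟨k', t'⟩ | a'
  · rw [coneNorm_inr, coneNorm_inl] at hn
    by_cases g0 : t' = 0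
    · rw [if_pos g0] at hn; exact absurd hn (by simp)
    · rw [if_neg g0] at hn
      by_cases g1 : t' = 1
      · rw [if_pos g1] at hn
        simp only [Sum.inl.injEq, Sum.inr.injEq] at hn
        right; exact ⟨k', by rw [g1], hn.symm⟩
      · rw [if_neg g1] at hn; exact absurd hn (by simp)
  · rw [coneNorm_inr, coneNorm_inr] at hn
    simp only [Sum.inl.injEq, Sum.inr.injEq] at hn
    left; rw [hn]

lemma cone_eq_inl {K A : Type u} (f : K → A) {k : K} {t : unitInterval}
    {y : (K × unitInterval) ⊕ A}
    (h : Quot.mk (ConeRel f) (Sum.inl (k, t)) = Quot.mk (ConeRel f) y) :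
    (t = 0 ∧ ∃ k', y = Sum.inl (k', (0 : unitInterval))) ∨
    (t = 1 ∧ (y = Sum.inr (f k) ∨ ∃ k', y = Sum.inl (k', (1 : unitInterval)) ∧ f k' = f k)) ∨
    y = Sum.inl (k, t) := by
  have hn := coneNorm_eq f h
  rw [coneNorm_inl] at hn
  by_cases h0 : t = 0
  · rw [if_pos h0] at hn
    left
    refine ⟨h0, ?_⟩
    rcases y with ⟨k', t'⟩ | a'
    · rw [coneNorm_inl] at hn
      by_cases g0 : t' = 0
      · exact ⟨k', by rw [g0]⟩
      · rw [if_neg g0] at hn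
        by_cases g1 : t' = 1
        · rw [if_pos g1] at hn; exact absurd hn (by simp)
        · rw [if_neg g1] at hn; exact absurd hn (by simp)
    · rw [coneNorm_inr] at hn; exact absurd hn (by simp)
  · rw [if_neg h0] at hn
    by_cases h1 : t = 1
    · rw [if_pos h1] at hn
      right; left
      refine ⟨h1, ?_⟩
      rcases y with ⟨k', t'⟩ | a'
      · rw [coneNorm_inl] at hn
        by_cases g0 : t' = 0
        · rw [if_pos g0] at hn; exact absurd hn (by simp)
        · rw [if_neg g0] at hn
          by_cases g1 : t' = 1
          · rw [if_pos g1] at hn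
            simp only [Sum.inl.injEq, Sum.inr.injEq] at hn
            right; exact ⟨k', by rw [g1], hn.symm⟩
          · rw [if_neg g1] at hn; exact absurd hn (by simp)
      · rw [coneNorm_inr] at hn
        simp only [Sum.inl.injEq, Sum.inr.injEq] at hn
        left; rw [hn]
    · rw [if_neg h1] at hn
      right; right
      rcases y with ⟨k', t'⟩ | a'
      · rw [coneNorm_inl] at hn
        by_cases g0 : t' = 0
        · rw [if_pos g0] at hn; exact absurd hn (by simp)
        · rw [if_neg g0] at hn
          by_cases g1 : t' = 1
          · rw [if_pos g1] at hn; exact absurd hn (by simp)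
          · rw [if_neg g1] at hn
            simp only [Sum.inl.injEq, Prod.mk.injEq] at hn
            rw [hn.1, hn.2]
      · rw [coneNorm_inr] at hn; exact absurd hn (by simp)

noncomputable def sig (t s : unitInterval) : unitInterval :=
  ⟨(t : ℝ) + min (2 * (s : ℝ)) 1 * (1 - (t : ℝ)), by
    have h1 : min (2 * (s : ℝ)) 1 ≤ 1 := min_le_right _ _
    have h2 : (0:ℝ) ≤ min (2 * (s : ℝ)) 1 := le_min (by nlinarith [s.2.1]) zero_le_one
    constructor <;> nlinarith [t.2.1, t.2.2]⟩

noncomputable def tau (s : unitInterval) : unitInterval :=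
  ⟨max (2 * (s : ℝ) - 1) 0, le_max_right _ _,
    max_le (by nlinarith [s.2.2]) zero_le_one⟩

noncomputable def shr (s t : unitInterval) : unitInterval :=
  ⟨(1 - (s : ℝ)) * (t : ℝ), by
    constructor
    · nlinarith [s.2.2, t.2.1]
    · nlinarith [s.2.1, s.2.2, t.2.1, t.2.2]⟩

lemma continuous_sig : Continuous (fun x : unitInterval × unitInterval => sig x.1 x.2) := by
  apply Continuous.subtype_mk
  fun_prop

lemma continuous_tau : Continuous tau := by
  apply Continuous.subtype_mk
  fun_prop

lemma continuous_shr : Continuous (fun x : unitInterval × unitInterval => shr x.1 x.2) := by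
  apply Continuous.subtype_mk
  fun_prop

lemma sig_zero (t : unitInterval) : sig t 0 = t := by
  apply Subtype.ext
  show (t : ℝ) + min (2 * (((0 : unitInterval)) : ℝ)) 1 * (1 - (t : ℝ)) = (t : ℝ)
  norm_num

lemma sig_eq_one {s : unitInterval} (h : 1 / 2 ≤ (s : ℝ)) (t : unitInterval) : sig t s = 1 := by
  apply Subtype.ext
  show (t : ℝ) + min (2 * (s : ℝ)) 1 * (1 - (t : ℝ)) = 1
  rw [min_eq_right (by linarith)]
  ring

lemma sig_one (s : unitInterval) : sig 1 s = 1 := by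
  apply Subtype.ext
  show ((1 : unitInterval) : ℝ) + min (2 * (s : ℝ)) 1 * (1 - ((1 : unitInterval) : ℝ)) = 1
  norm_num

lemma tau_of_le {s : unitInterval} (h : (s : ℝ) ≤ 1 / 2) : tau s = 0 := by
  apply Subtype.ext
  show max (2 * (s : ℝ) - 1) 0 = 0
  rw [max_eq_right (by linarith)]

lemma tau_one : tau 1 = 1 := by
  apply Subtype.ext
  show max (2 * ((1 : unitInterval) : ℝ) - 1) 0 = 1
  norm_num

lemma shr_zero (t : unitInterval) : shr 0 t = t := by
  apply Subtype.ext
  show (1 - ((0 : unitInterval) : ℝ)) * (t : ℝ) = (t : ℝ)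
  norm_num

lemma shr_one (t : unitInterval) : shr 1 t = 0 := by
  apply Subtype.ext
  show (1 - ((1 : unitInterval) : ℝ)) * (t : ℝ) = ((0 : unitInterval) : ℝ)
  norm_num

lemma shr_apex (s : unitInterval) : shr s 0 = 0 := by
  apply Subtype.ext
  show (1 - (s : ℝ)) * (((0 : unitInterval)) : ℝ) = ((0 : unitInterval) : ℝ)
  norm_num

lemma Ioc_open : IsOpen (Set.Ioc (0 : unitInterval) 1) := by
  have : Set.Ioc (0 : unitInterval) 1 = (fun t : unitInterval => (t : ℝ)) ⁻¹' Set.Ioi 0 := by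
    ext t
    simp only [Set.mem_Ioc, Set.mem_preimage, Set.mem_Ioi]
    constructor
    · rintro ⟨h1, _⟩; exact h1
    · intro h; exact ⟨h, t.2.2⟩
  rw [this]
  exact isOpen_Ioi.preimage continuous_subtype_val

lemma Ico_open : IsOpen (Set.Ico (0 : unitInterval) 1) := by
  have : Set.Ico (0 : unitInterval) 1 = (fun t : unitInterval => (t : ℝ)) ⁻¹' Set.Iio 1 := by
    ext t
    simp only [Set.mem_Ico, Set.mem_preimage, Set.mem_Iio]
    constructor
    · rintro ⟨_, h1⟩; exact h1
    · intro h; exact ⟨t.2.1, h⟩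
  rw [this]
  exact isOpen_Iio.preimage continuous_subtype_val

section ConeStep

variable {K A : Type u} [TopologicalSpace K] [TopologicalSpace A]

/-- thick base piece -/
abbrev coneS (f : C(K, A)) (Uj : Set A) : Set (K × unitInterval) :=
  (⇑f ⁻¹' Uj) ×ˢ Set.Ioc (0 : unitInterval) 1

noncomputable def coneH1 (f : C(K, A)) (Uj : Set A) (Hc : C(↥Uj × unitInterval, A)) :
    ↥(coneS f Uj) × unitInterval → MappingCone ⇑f := fun x =>
  if ((x.2 : ℝ)) ≤ 1 / 2 then
    Quot.mk _ (Sum.inl ((x.1 : K × unitInterval).1, sig (x.1 : K × unitInterval).2 x.2))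
  else Quot.mk _ (Sum.inr (Hc (⟨f (x.1 : K × unitInterval).1, x.1.2.1⟩, tau x.2)))

noncomputable def coneH2 (f : C(K, A)) (Uj : Set A) (Hc : C(↥Uj × unitInterval, A)) :
    ↥Uj × unitInterval → MappingCone ⇑f := fun x =>
  if ((x.2 : ℝ)) ≤ 1 / 2 then Quot.mk _ (Sum.inr ↑x.1)
  else Quot.mk _ (Sum.inr (Hc (x.1, tau x.2)))

variable (f : C(K, A)) (Uj : Set A) (Hc : C(↥Uj × unitInterval, A))

lemma continuous_coneH1 (hc0 : ∀ u, Hc (u, 0) = ↑u) : Continuous (coneH1 f Uj Hc) := by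
  have c1 : Continuous fun x : ↥(coneS f Uj) × unitInterval => (x.1 : K × unitInterval) :=
    continuous_subtype_val.comp continuous_fst
  apply Continuous.if_le
  · exact (isQuotientMap_quot_mk.continuous).comp (continuous_inl.comp
      (c1.fst.prodMk (continuous_sig.comp (c1.snd.prodMk continuous_snd))))
  · exact (isQuotientMap_quot_mk.continuous).comp (continuous_inr.comp (Hc.continuous.comp
      ((Continuous.subtype_mk (f.continuous.comp c1.fst) _).prodMk
        (continuous_tau.comp continuous_snd))))
  · exact continuous_subtype_val.comp continuous_snd
  · exact continuous_const
  · intro x h12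
    have h1 : sig (x.1 : K × unitInterval).2 x.2 = 1 := sig_eq_one (le_of_eq h12.symm) _
    have h2 : tau x.2 = 0 := tau_of_le (le_of_eq h12)
    rw [h1, h2, hc0]
    exact Quot.sound (ConeRel.glue _)

lemma continuous_coneH2 (hc0 : ∀ u, Hc (u, 0) = ↑u) : Continuous (coneH2 f Uj Hc) := by
  apply Continuous.if_le
  · exact (isQuotientMap_quot_mk.continuous).comp
      (continuous_inr.comp (continuous_subtype_val.comp continuous_fst))
  · exact (isQuotientMap_quot_mk.continuous).comp (continuous_inr.comp (Hc.continuous.comp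
      (continuous_fst.prodMk (continuous_tau.comp continuous_snd))))
  · exact continuous_subtype_val.comp continuous_snd
  · exact continuous_const
  · intro x h12
    rw [tau_of_le (le_of_eq h12), hc0]

lemma coneH1_zero (d : ↥(coneS f Uj)) :
    coneH1 f Uj Hc (d, 0) = Quot.mk _ (Sum.inl ↑d) := by
  show (if _ ≤ _ then _ else _) = _
  rw [if_pos (by norm_num : (((0 : unitInterval)) : ℝ) ≤ 1 / 2), sig_zero]

lemma coneH2_zero (u : ↥Uj) :
    coneH2 f Uj Hc (u, 0) = Quot.mk _ (Sum.inr ↑u) := by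
  show (if _ ≤ _ then _ else _) = _
  rw [if_pos (by norm_num : (((0 : unitInterval)) : ℝ) ≤ 1 / 2)]

lemma coneH1_one {a0 : A} (hc1 : ∀ u, Hc (u, 1) = a0) (d : ↥(coneS f Uj)) :
    coneH1 f Uj Hc (d, 1) = Quot.mk _ (Sum.inr a0) := by
  show (if _ ≤ _ then _ else _) = _
  rw [if_neg (by norm_num : ¬(((1 : unitInterval)) : ℝ) ≤ 1 / 2), tau_one, hc1]

lemma coneH2_one {a0 : A} (hc1 : ∀ u, Hc (u, 1) = a0) (u : ↥Uj) :
    coneH2 f Uj Hc (u, 1) = Quot.mk _ (Sum.inr a0) := by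
  show (if _ ≤ _ then _ else _) = _
  rw [if_neg (by norm_num : ¬(((1 : unitInterval)) : ℝ) ≤ 1 / 2), tau_one, hc1]

lemma coneH1_top (hc0 : ∀ u, Hc (u, 0) = ↑u) (k : K) (hk : (k, (1 : unitInterval)) ∈ coneS f Uj)
    (s : unitInterval) :
    coneH1 f Uj Hc (⟨(k, 1), hk⟩, s) = Quot.mk _ (Sum.inr (Hc (⟨f k, hk.1⟩, tau s))) := by
  show (if _ ≤ _ then _ else _) = _
  by_cases hs : ((s : ℝ)) ≤ 1 / 2
  · rw [if_pos hs, sig_one, tau_of_le hs, hc0]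
    exact Quot.sound (ConeRel.glue k)
  · rw [if_neg hs]

lemma coneH1_eq_coneH2 (hc0 : ∀ u, Hc (u, 0) = ↑u) (k : K)
    (hk : (k, (1 : unitInterval)) ∈ coneS f Uj) (a : A) (ha : a ∈ Uj) (hfa : f k = a)
    (s : unitInterval) :
    coneH1 f Uj Hc (⟨(k, 1), hk⟩, s) = coneH2 f Uj Hc (⟨a, ha⟩, s) := by
  rw [coneH1_top f Uj Hc hc0 k hk s]
  show _ = (if _ ≤ _ then _ else _)
  by_cases hs : ((s : ℝ)) ≤ 1 / 2
  · rw [if_pos hs, tau_of_le hs, hc0]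
    exact congrArg _ (congrArg _ hfa)
  · rw [if_neg hs]
    have : (⟨f k, hk.1⟩ : ↥Uj) = ⟨a, ha⟩ := Subtype.ext hfa
    rw [this]

end ConeStep


section Descend
variable {Y M D : Type u} [TopologicalSpace Y] [TopologicalSpace M] [TopologicalSpace D]
  {q : Y → M} {p : D → Y}

lemma isQuotientMap_restrict (hq : IsQuotientMap q) (hp : Continuous p) (ho : IsOpenMap p)
    (hsat : q ⁻¹' (q '' range p) = range p) :
    IsQuotientMap (fun d => (⟨q (p d), mem_image_of_mem q ⟨d, rfl⟩⟩ : ↥(q '' range p))) := by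
  set V := q '' range p with hVdef
  set p' : D → ↥V := fun d => ⟨q (p d), mem_image_of_mem q ⟨d, rfl⟩⟩ with hp'
  simp_rw [isQuotientMap_iff, isCoinducing_iff, and_comm, iff_comm]
  constructor
  · rintro ⟨m, y, ⟨d, rfl⟩, rfl⟩
    exact ⟨d, rfl⟩
  · intro s
    constructor
    · intro hs
      exact hs.preimage ((hq.continuous.comp hp).subtype_mk _)
    · intro hs
      have hkey : q ⁻¹' (Subtype.val '' s) = p '' (p' ⁻¹' s) := by
        ext y
        constructor
        · rintro ⟨v, hv, hvq⟩
          have hyV : y ∈ q ⁻¹' V := by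
            show q y ∈ V
            rw [← hvq]
            exact v.2
          rw [hsat] at hyV
          obtain ⟨d, rfl⟩ := hyV
          refine ⟨d, ?_, rfl⟩
          have : p' d = v := Subtype.ext hvq.symm
          rw [Set.mem_preimage, this]; exact hv
        · rintro ⟨d, hd, rfl⟩
          exact ⟨p' d, hd, rfl⟩
      have hopen : IsOpen (Subtype.val '' s) := by
        rw [← hq.isOpen_preimage, hkey]
        exact ho _ (hs.preimage (by continuity))
      have : s = Subtype.val ⁻¹' (Subtype.val '' s) :=
        (Set.preimage_image_eq s Subtype.val_injective).symm
      rw [this]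
      exact hopen.preimage continuous_subtype_val

lemma contractibleIn_of_descend (hq : IsQuotientMap q) (hp : Continuous p) (ho : IsOpenMap p)
    (hsat : q ⁻¹' (q '' range p) = range p)
    (H : C(D × unitInterval, M))
    (hfib : ∀ a b : D, q (p a) = q (p b) → ∀ t, H (a, t) = H (b, t))
    (h0 : ∀ d, H (d, 0) = q (p d)) (x0 : M) (h1 : ∀ d, H (d, 1) = x0) :
    ContractibleIn (q '' range p) := by
  set V := q '' range p with hVdef
  set p' : D → ↥V := fun d => ⟨q (p d), mem_image_of_mem q ⟨d, rfl⟩⟩ with hp'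
  have hq' : IsQuotientMap p' := isQuotientMap_restrict hq hp ho hsat
  have hkey : ∀ d : D, H.curry (surjInv hq'.surjective (p' d)) = H.curry d := by
    intro d
    ext t
    simp only [ContinuousMap.curry_apply]
    apply hfib
    have := surjInv_eq hq'.surjective (p' d)
    exact congrArg Subtype.val this
  have hg : Continuous (fun v : V => H.curry (surjInv hq'.surjective v)) := by
    rw [hq'.continuous_iff]
    have : (fun v : V => H.curry (surjInv hq'.surjective v)) ∘ p' = fun d => H.curry d := by
      funext d; exact hkey d
    rw [this]
    exact H.curry.continuous
  set H' : C(↥V × unitInterval, M) :=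
    ContinuousMap.uncurry ⟨fun v : V => H.curry (surjInv hq'.surjective v), hg⟩ with hH'
  have happ : ∀ (d : D) (t : unitInterval), H' (p' d, t) = H (d, t) := by
    intro d t
    show H.curry (surjInv hq'.surjective (p' d)) t = H (d, t)
    rw [hkey d]
    simp [ContinuousMap.curry_apply]
  refine ⟨x0, H', fun v => ?_, fun v => ?_⟩
  · obtain ⟨d, rfl⟩ := hq'.surjective v
    rw [happ, h0]
  · obtain ⟨d, rfl⟩ := hq'.surjective v
    rw [happ, h1]

end Descend


lemma catLE_mappingCone {K A : Type u} [TopologicalSpace K] [TopologicalSpace A]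
    (f : C(K, A)) {n : ℕ} (hA : catLE A n) : catLE (MappingCone ⇑f) (n + 1) := by
  classical
  obtain ⟨U, hopen, hcov, hctr⟩ := hA
  have hq : IsQuotientMap (Quot.mk (ConeRel ⇑f)) := isQuotientMap_quot_mk
  obtain ⟨a00, -, -, -⟩ := hctr 0
  have h01 : (0 : unitInterval) < 1 := by
    rw [← Subtype.coe_lt_coe]
    norm_num
  have hV : ∀ j : Fin (n + 1), ∃ V : Set (MappingCone ⇑f),
      IsOpen V ∧ ContractibleIn V ∧ (∀ a, a ∈ U j → Quot.mk (ConeRel ⇑f) (Sum.inr a) ∈ V) := by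
    intro j
    obtain ⟨a0, Hc, hc0, hc1⟩ := hctr j
    have hSopen : IsOpen (coneS f (U j)) := ((hopen j).preimage f.continuous).prod Ioc_open
    set p : (↥(coneS f (U j)) ⊕ ↥(U j)) → (K × unitInterval) ⊕ A :=
      Sum.elim (Sum.inl ∘ Subtype.val) (Sum.inr ∘ Subtype.val) with hpdef
    have hp : Continuous p := (continuous_inl.comp continuous_subtype_val).sumElim
      (continuous_inr.comp continuous_subtype_val)
    have ho : IsOpenMap p := (isOpenMap_inl.comp hSopen.isOpenMap_subtype_val).sumElim
      (isOpenMap_inr.comp (hopen j).isOpenMap_subtype_val)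
    have hrange : Set.range p = Sum.inl '' (coneS f (U j)) ∪ Sum.inr '' (U j) := by
      rw [hpdef, Set.Sum.elim_range, Set.range_comp, Set.range_comp,
        Subtype.range_coe, Subtype.range_coe]
    have hsat : Quot.mk (ConeRel ⇑f) ⁻¹' (Quot.mk (ConeRel ⇑f) '' Set.range p)
        = Set.range p := by
      apply subset_antisymm
      · intro y hy
        obtain ⟨x, hx, hxy⟩ := hy
        rw [hrange] at hx ⊢
        rcases hx with ⟨⟨k, t⟩, hkt, rfl⟩ | ⟨a, ha, rfl⟩
        · rcases cone_eq_inl ⇑f hxy with ⟨h0, -⟩ | ⟨h1, hcs⟩ | hy'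
          · rw [h0] at hkt
            exact absurd hkt.2.1 (lt_irrefl 0)
          · rcases hcs with rfl | ⟨k', rfl, hk'⟩
            · exact Or.inr ⟨f k, hkt.1, rfl⟩
            · refine Or.inl ⟨(k', 1), ⟨?_, h01, le_refl 1⟩, rfl⟩
              show f k' ∈ U j
              rw [hk']
              exact hkt.1
          · exact Or.inl ⟨(k, t), hkt, hy'.symm⟩
        · rcases cone_eq_inr ⇑f hxy with rfl | ⟨k, rfl, hk⟩
          · exact Or.inr ⟨a, ha, rfl⟩
          · refine Or.inl ⟨(k, 1), ⟨?_, h01, le_refl 1⟩, rfl⟩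
            show f k ∈ U j
            rw [hk]
            exact ha
      · exact Set.subset_preimage_image _ _
    -- the homotopy
    set Hfun : C((↥(coneS f (U j)) × unitInterval) ⊕ (↥(U j) × unitInterval),
        MappingCone ⇑f) :=
      ⟨Sum.elim (coneH1 f (U j) Hc) (coneH2 f (U j) Hc),
        (continuous_coneH1 f (U j) Hc hc0).sumElim (continuous_coneH2 f (U j) Hc hc0)⟩
      with hHfun
    set e := (Homeomorph.sumProdDistrib :
      (↥(coneS f (U j)) ⊕ ↥(U j)) × unitInterval ≃ₜ _) with he
    set H : C((↥(coneS f (U j)) ⊕ ↥(U j)) × unitInterval, MappingCone ⇑f) :=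
      Hfun.comp ⟨⇑e, e.continuous⟩ with hH
    have hHl : ∀ d t, H (Sum.inl d, t) = coneH1 f (U j) Hc (d, t) := fun d t => rfl
    have hHr : ∀ u t, H (Sum.inr u, t) = coneH2 f (U j) Hc (u, t) := fun u t => rfl
    have hLR : ∀ (d : ↥(coneS f (U j))) (u : ↥(U j)),
        Quot.mk (ConeRel ⇑f) (Sum.inl (d : K × unitInterval))
          = Quot.mk (ConeRel ⇑f) (Sum.inr (u : A)) →
        ∀ s, coneH1 f (U j) Hc (d, s) = coneH2 f (U j) Hc (u, s) := by
      rintro ⟨⟨k, t⟩, hkt⟩ ⟨a, ha⟩ hab s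
      rcases cone_eq_inl ⇑f hab with ⟨h0, -⟩ | ⟨h1, hcs⟩ | hy'
      · rw [h0] at hkt
        exact absurd hkt.2.1 (lt_irrefl 0)
      · rcases hcs with heq | ⟨k', heq, -⟩
        · have ha' : a = f k := Sum.inr.inj heq
          subst h1
          exact coneH1_eq_coneH2 f (U j) Hc hc0 k hkt a ha ha'.symm s
        · exact absurd heq (by simp)
      · exact absurd hy' (by simp)
    have hfib : ∀ a b, Quot.mk (ConeRel ⇑f) (p a) = Quot.mk (ConeRel ⇑f) (p b) →
        ∀ t, H (a, t) = H (b, t) := by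
      rintro (d | u) (d' | u') hab t
      · -- inl / inl
        rw [hHl, hHl]
        obtain ⟨⟨k, s⟩, hkt⟩ := d
        obtain ⟨⟨k', s'⟩, hkt'⟩ := d'
        have hab' : Quot.mk (ConeRel ⇑f) (Sum.inl (k, s))
            = Quot.mk (ConeRel ⇑f) (Sum.inl (k', s')) := hab
        rcases cone_eq_inl ⇑f hab' with ⟨h0, -⟩ | ⟨h1, hcs⟩ | hy'
        · rw [h0] at hkt
          exact absurd hkt.2.1 (lt_irrefl 0)
        · rcases hcs with heq | ⟨k'', heq, hk''⟩
          · exact absurd heq (by simp)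
          · have h2 : k' = k'' ∧ s' = 1 := by
              have := Sum.inl.inj heq
              exact ⟨congrArg Prod.fst this, congrArg Prod.snd this⟩
            obtain ⟨rfl, rfl⟩ := h2
            subst h1
            rw [coneH1_top f (U j) Hc hc0 k hkt t, coneH1_top f (U j) Hc hc0 k' hkt' t]
            have : (⟨f k, hkt.1⟩ : ↥(U j)) = ⟨f k', hkt'.1⟩ := Subtype.ext hk''.symm
            rw [this]
        · have := Sum.inl.inj hy'
          have h2 : k' = k ∧ s' = s :=
            ⟨congrArg Prod.fst this, congrArg Prod.snd this⟩
          obtain ⟨rfl, rfl⟩ := h2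
          rfl
      · -- inl / inr
        rw [hHl, hHr]
        exact hLR d u' hab t
      · -- inr / inl
        rw [hHl, hHr]
        exact (hLR d' u hab.symm t).symm
      · -- inr / inr
        rw [hHr, hHr]
        have hab' : Quot.mk (ConeRel ⇑f) (Sum.inr (u : A))
            = Quot.mk (ConeRel ⇑f) (Sum.inr (u' : A)) := hab
        rcases cone_eq_inr ⇑f hab' with heq | ⟨k, heq, -⟩
        · have : (u' : A) = (u : A) := Sum.inr.inj heq
          rw [Subtype.ext this]
        · exact absurd heq (by simp)
    have hzero : ∀ d, H (d, 0) = Quot.mk (ConeRel ⇑f) (p d) := by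
      rintro (d | u)
      · rw [hHl, coneH1_zero]
        rfl
      · rw [hHr, coneH2_zero]
        rfl
    have hone : ∀ d, H (d, 1) = Quot.mk (ConeRel ⇑f) (Sum.inr a0) := by
      rintro (d | u)
      · rw [hHl, coneH1_one f (U j) Hc hc1]
      · rw [hHr, coneH2_one f (U j) Hc hc1]
    refine ⟨Quot.mk (ConeRel ⇑f) '' Set.range p, ?_, ?_, ?_⟩
    · exact hq.isOpen_preimage.mp (by rw [hsat]; exact ho.isOpen_range)
    · exact contractibleIn_of_descend hq hp ho hsat H hfib hzero _ hone
    · intro a ha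
      exact Set.mem_image_of_mem _ (by rw [hrange]; exact Or.inr ⟨a, ha, rfl⟩)
  have hW : ∃ W : Set (MappingCone ⇑f), IsOpen W ∧ ContractibleIn W ∧
      (∀ (k : K) (t : unitInterval), t ≠ 1 → Quot.mk (ConeRel ⇑f) (Sum.inl (k, t)) ∈ W) := by
    have hSopen : IsOpen ((Set.univ : Set K) ×ˢ Set.Ico (0 : unitInterval) 1) :=
      isOpen_univ.prod Ico_open
    set SW := (Set.univ : Set K) ×ˢ Set.Ico (0 : unitInterval) 1 with hSW
    set p : ↥SW → (K × unitInterval) ⊕ A := Sum.inl ∘ Subtype.val with hpdef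
    have hp : Continuous p := continuous_inl.comp continuous_subtype_val
    have ho : IsOpenMap p := isOpenMap_inl.comp hSopen.isOpenMap_subtype_val
    have hrange : Set.range p = Sum.inl '' SW := by
      rw [hpdef, Set.range_comp, Subtype.range_coe]
    have hsat : Quot.mk (ConeRel ⇑f) ⁻¹' (Quot.mk (ConeRel ⇑f) '' Set.range p)
        = Set.range p := by
      apply subset_antisymm
      · intro y hy
        obtain ⟨x, hx, hxy⟩ := hy
        rw [hrange] at hx ⊢
        obtain ⟨⟨k, t⟩, hkt, rfl⟩ := hx
        rcases cone_eq_inl ⇑f hxy with ⟨h0, k', rfl⟩ | ⟨h1, -⟩ | hy'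
        · exact ⟨(k', 0), ⟨trivial, le_refl 0, h01⟩, rfl⟩
        · rw [h1] at hkt
          exact absurd hkt.2.2 (lt_irrefl 1)
        · exact ⟨(k, t), hkt, hy'.symm⟩
      · exact Set.subset_preimage_image _ _
    set HW : C(↥SW × unitInterval, MappingCone ⇑f) :=
      ⟨fun x => Quot.mk (ConeRel ⇑f)
          (Sum.inl ((x.1 : K × unitInterval).1, shr x.2 (x.1 : K × unitInterval).2)), by
        have c1 : Continuous fun x : ↥SW × unitInterval => (x.1 : K × unitInterval) :=
          continuous_subtype_val.comp continuous_fst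
        exact (isQuotientMap_quot_mk.continuous).comp (continuous_inl.comp
          (c1.fst.prodMk (continuous_shr.comp (continuous_snd.prodMk c1.snd))))⟩
      with hHW
    have hfib : ∀ a b, Quot.mk (ConeRel ⇑f) (p a) = Quot.mk (ConeRel ⇑f) (p b) →
        ∀ t, HW (a, t) = HW (b, t) := by
      rintro ⟨⟨k, t⟩, hkt⟩ ⟨⟨k', t'⟩, hkt'⟩ hab s
      rcases cone_eq_inl ⇑f hab with ⟨h0, hex⟩ | ⟨h1, -⟩ | hy'
      · obtain ⟨k'', heq⟩ := hex
        have h2 : k' = k'' ∧ t' = 0 := by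
          have := Sum.inl.inj heq
          exact ⟨congrArg Prod.fst this, congrArg Prod.snd this⟩
        obtain ⟨rfl, rfl⟩ := h2
        subst h0
        show Quot.mk _ (Sum.inl (k, shr s 0)) = Quot.mk _ (Sum.inl (k', shr s 0))
        rw [shr_apex]
        exact Quot.sound (ConeRel.apex k k')
      · rw [h1] at hkt
        exact absurd hkt.2.2 (lt_irrefl 1)
      · have := Sum.inl.inj hy'
        have h2 : k' = k ∧ t' = t :=
          ⟨congrArg Prod.fst this, congrArg Prod.snd this⟩
        obtain ⟨rfl, rfl⟩ := h2
        rfl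
    have hzero : ∀ d, HW (d, 0) = Quot.mk (ConeRel ⇑f) (p d) := by
      rintro ⟨⟨k, t⟩, hkt⟩
      show Quot.mk _ (Sum.inl (k, shr 0 t)) = _
      rw [shr_zero]
      rfl
    rcases isEmpty_or_nonempty K with hK | hK
    · refine ⟨Quot.mk (ConeRel ⇑f) '' Set.range p, ?_, ?_, ?_⟩
      · exact hq.isOpen_preimage.mp (by rw [hsat]; exact ho.isOpen_range)
      · refine contractibleIn_of_descend hq hp ho hsat HW hfib hzero
          (Quot.mk (ConeRel ⇑f) (Sum.inr a00)) ?_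
        rintro ⟨⟨k, t⟩, -⟩
        exact (hK.false k).elim
      · intro k
        exact (hK.false k).elim
    · obtain ⟨k0⟩ := hK
      refine ⟨Quot.mk (ConeRel ⇑f) '' Set.range p, ?_, ?_, ?_⟩
      · exact hq.isOpen_preimage.mp (by rw [hsat]; exact ho.isOpen_range)
      · refine contractibleIn_of_descend hq hp ho hsat HW hfib hzero
          (Quot.mk (ConeRel ⇑f) (Sum.inl (k0, 0))) ?_
        rintro ⟨⟨k, t⟩, -⟩
        show Quot.mk _ (Sum.inl (k, shr 1 t)) = _
        rw [shr_one]
        exact Quot.sound (ConeRel.apex k k0)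
      · intro k t ht
        refine Set.mem_image_of_mem _ ?_
        rw [hrange]
        exact ⟨(k, t), ⟨trivial, unitInterval.nonneg' , lt_of_le_of_ne unitInterval.le_one' ht⟩, rfl⟩
  choose V hVopen hVctr hVmem using hV
  obtain ⟨W, hWopen, hWctr, hWmem⟩ := hW
  refine ⟨Fin.cons W V, ?_, ?_, ?_⟩
  · intro i
    induction i using Fin.cases with
    | zero => simpa using hWopen
    | succ j => simpa using hVopen j
  · intro x
    induction x using Quot.ind with
    | _ y =>
      rcases y with ⟨k, t⟩ | a
      · by_cases ht : t = 1
        · subst ht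
          obtain ⟨j, hj⟩ := hcov (f k)
          refine ⟨j.succ, ?_⟩
          rw [show Quot.mk (ConeRel ⇑f) (Sum.inl (k, 1)) = Quot.mk (ConeRel ⇑f) (Sum.inr (f k))
            from Quot.sound (ConeRel.glue k)]
          simpa [Fin.cons_succ] using hVmem j _ hj
        · exact ⟨0, by simpa [Fin.cons_zero] using hWmem k t ht⟩
      · obtain ⟨j, hj⟩ := hcov a
        exact ⟨j.succ, by simpa [Fin.cons_succ] using hVmem j a hj⟩
  · intro i
    induction i using Fin.cases with
    | zero => simpa using hWctr
    | succ j => simpa using hVctr j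

section Transfer
variable {Y : Type u} {Z : Type*} [TopologicalSpace Y] [TopologicalSpace Z]

lemma catLE_of_homotopyEquiv (e : ContinuousMap.HomotopyEquiv Y Z) {n : ℕ}
    (h : catLE Y n) : catLE Z n := by
  obtain ⟨U, hopen, hcov, hctr⟩ := h
  obtain ⟨G⟩ := e.right_inv
  refine ⟨fun i => e.invFun ⁻¹' U i, fun i => (hopen i).preimage e.invFun.continuous,
    fun z => hcov (e.invFun z), fun i => ?_⟩
  obtain ⟨y0, Hc, hc0, hc1⟩ := hctr i
  set V : Set Z := e.invFun ⁻¹' U i with hV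
  letI ι : C(V, Z) := ⟨Subtype.val, continuous_subtype_val⟩
  letI b : C(V, Z) := ⟨fun v => e.toFun (e.invFun ↑v), by fun_prop⟩
  letI ρ : C(V, U i) := ⟨fun v => ⟨e.invFun ↑v, v.2⟩,
    Continuous.subtype_mk (by fun_prop) _⟩
  letI H1 : ContinuousMap.Homotopy ι b :=
    { toContinuousMap := G.symm.toContinuousMap.comp
        ((ContinuousMap.id unitInterval).prodMap ι)
      map_zero_left := fun v => G.symm.apply_zero (ι v)
      map_one_left := fun v => G.symm.apply_one (ι v) }
  letI H2 : ContinuousMap.Homotopy b (ContinuousMap.const V (e.toFun y0)) :=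
    { toContinuousMap := ⟨fun p => e.toFun (Hc (ρ p.2, p.1)), by fun_prop⟩
      map_zero_left := fun v => congrArg e.toFun (hc0 (ρ v))
      map_one_left := fun v => congrArg e.toFun (hc1 (ρ v)) }
  letI Htot := H1.trans H2
  refine ⟨e.toFun y0, Htot.toContinuousMap.comp ⟨Prod.swap, continuous_swap⟩, fun v => ?_,
    fun v => ?_⟩
  · exact Htot.apply_zero v
  · exact Htot.apply_one v

end Transfer

/-- For a connected CW-complex `X`: if `X` admits a cone-decomposition of length `m`
(`Cat(X) ≤ m`), then `cat(X) ≤ m`; that is, `cat(X) ≤ Cat(X)`. -/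
theorem cat_le_Cat (X : Type u) [TopologicalSpace X] [ConnectedSpace X]
    (C : Σ Y : TopCat.{u}, TopCat.CWComplex Y) (hCW : Nonempty ((C.1 : TopCat.{u}) ≃ₜ X))
    (m : ℕ) (D : ConeDecomp X m) : catLE X m := by
  have key : ∀ i : Fin (m + 1), catLE (D.F i) i.1 := by
    intro i
    induction i using Fin.induction with
    | zero =>
      haveI := D.F0
      exact ⟨fun _ => Set.univ, fun _ => isOpen_univ, fun x => ⟨0, trivial⟩, fun _ =>
        ⟨default, ContinuousMap.const _ default, fun u => Subsingleton.elim _ _, fun u => rfl⟩⟩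
    | succ i ih =>
      have h1 : catLE (MappingCone ⇑(D.h i)) (i.1 + 1) :=
        catLE_mappingCone (D.h i) (by simpa using ih)
      have h2 := catLE_of_homotopyEquiv ((D.cone i).symm.toHomotopyEquiv) h1
      simpa using h2
  have hfin := catLE_of_homotopyEquiv D.equiv (key (Fin.last m))
  simpa using hfin
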